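/- Let Λ be a lattice in ℝ². Suppose F : ℝ² → ℝ² is continuous, G : ℝ² → ℝ² is a homeomorphism, and π_Λ ∘ F = π_Λ ∘ G (i.e., F(x) lies in the Γ_Λ-orbit of G(x) for every x). Then there exists a single element γ ∈ Γ_Λ such that F = γ ∘ G. In particular, a map inducing a given map on ℝ²/Γ_Λ is unique up to postcomposition with an element of Γ_Λ. -/

import Mathlib

/-- The plane ℝ². -/
abbrev V2 : Type := EuclideanSpace ℝ (Fin 2)

/-- `Λ` is a lattice in ℝ²: a discrete additive subgroup spanning ℝ². -/
def IsLattice (Λ : AddSubgroup V2) : Prop :=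
  DiscreteTopology Λ ∧ Submodule.span ℝ (Λ : Set V2) = ⊤

/-- The group `Γ_Λ` of maps `x ↦ 2λ + x` or `x ↦ 2λ − x` with `λ ∈ Λ`, as a set of
self-maps of ℝ². -/
def GammaSet (Λ : AddSubgroup V2) : Set (V2 → V2) :=
  {g : V2 → V2 | ∃ l ∈ Λ,
    g = (fun x => (2:ℝ) • l + x) ∨ g = fun x => (2:ℝ) • l - x}

/-- The `Γ_Λ`-orbit of `x`: the set `{2λ + x : λ ∈ Λ} ∪ {2λ − x : λ ∈ Λ}`. -/
def orbitG (Λ : AddSubgroup V2) (x : V2) : Set V2 :=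
  {y : V2 | ∃ l ∈ Λ, y = (2:ℝ) • l + x ∨ y = (2:ℝ) • l - x}

/-- Let `Λ` be a lattice in ℝ².  Suppose `F : ℝ² → ℝ²` is continuous, `G : ℝ² → ℝ²` is a
homeomorphism, and `π_Λ ∘ F = π_Λ ∘ G` (i.e. `F(x)` lies in the `Γ_Λ`-orbit of `G(x)` for
every `x`).  Then there is a single element `γ ∈ Γ_Λ` with `F = γ ∘ G`: a map inducing a
given map on `ℝ²/Γ_Λ` is unique up to postcomposition with an element of `Γ_Λ`. -/
theorem lift_unique_up_to_gamma
    (Λ : AddSubgroup V2) (hΛ : IsLattice Λ)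
    (F : V2 → V2) (hF : Continuous F) (G : V2 ≃ₜ V2)
    (hFG : ∀ x : V2, F x ∈ orbitG Λ (G x)) :
    ∃ γ ∈ GammaSet Λ, F = γ ∘ ⇑G := by
  haveI := hΛ.1
  -- pass to H = F ∘ G⁻¹
  set H : V2 → V2 := F ∘ ⇑G.symm with hHdef
  have hH : Continuous H := hF.comp G.symm.continuous
  have hOrb : ∀ y : V2, H y ∈ orbitG Λ y := by
    intro y
    have := hFG (G.symm y)
    simpa [hHdef] using this
  -- the two "shift detector" functions
  set a : V2 → V2 := fun y => (2⁻¹:ℝ) • (H y - y) with hadef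
  set b : V2 → V2 := fun y => (2⁻¹:ℝ) • (H y + y) with hbdef
  have ha : Continuous a := by
    have := (hH.sub continuous_id).const_smul (2⁻¹:ℝ); exact this
  have hb : Continuous b := by
    have := (hH.add continuous_id).const_smul (2⁻¹:ℝ); exact this
  have hab : ∀ y : V2, a y ∈ Λ ∨ b y ∈ Λ := by
    intro y
    obtain ⟨l, hl, hcase | hcase⟩ := hOrb y
    · left
      have : a y = l := by
        simp only [hadef, hcase, add_sub_cancel_right, smul_smul]
        norm_num
      rwa [this]
    · right
      have : b y = l := by
        simp only [hbdef, hcase, sub_add_cancel, smul_smul]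
        norm_num
      rwa [this]
  have hboth : ∀ y : V2, a y ∈ Λ → b y ∈ Λ → y ∈ Λ := by
    intro y hay hby
    have : y = b y - a y := by
      simp only [hadef, hbdef, ← smul_sub]
      have : H y + y - (H y - y) = (2:ℝ) • y := by
        rw [two_smul]; abel
      rw [this, smul_smul]
      norm_num
    rw [this]
    exact sub_mem hby hay
  -- closedness of the two sets
  have hclosedΛ : IsClosed (Λ : Set V2) := AddSubgroup.isClosed_of_discrete
  have hA : IsClosed (a ⁻¹' (Λ : Set V2)) := hclosedΛ.preimage ha
  have hB : IsClosed (b ⁻¹' (Λ : Set V2)) := hclosedΛ.preimage hb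
  -- Λ is countable, so its complement is dense and connected
  have hcnt : (Λ : Set V2).Countable := by
    have : Countable Λ := TopologicalSpace.separableSpace_iff_countable.mp inferInstance
    exact Set.countable_coe_iff.mp this
  have hrank : 1 < Module.rank ℝ V2 := by
    rw [← Module.finrank_eq_rank]
    norm_num [finrank_euclideanSpace_fin]
  have hconn : IsPreconnected ((Λ : Set V2)ᶜ) :=
    (hcnt.isConnected_compl_of_one_lt_rank hrank).isPreconnected
  have hdense : Dense ((Λ : Set V2)ᶜ) := hcnt.dense_compl ℝ
  -- complement of Λ is covered by the two disjoint open sets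
  have hdisj : Disjoint ((b ⁻¹' (Λ : Set V2))ᶜ) ((a ⁻¹' (Λ : Set V2))ᶜ) := by
    rw [Set.disjoint_left]
    intro y hyB hyA
    exact hyA ((hab y).resolve_right hyB)
  have hcover : ((Λ : Set V2)ᶜ) ⊆ ((b ⁻¹' (Λ : Set V2))ᶜ) ∪ ((a ⁻¹' (Λ : Set V2))ᶜ) := by
    intro y hy
    by_contra h
    simp only [Set.mem_union, Set.mem_compl_iff, not_or, not_not] at h
    exact hy (hboth y h.2 h.1)
  -- a map that is everywhere in Λ and continuous is constant
  have hconst : ∀ (f : V2 → V2), Continuous f → (∀ y, f y ∈ Λ) →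
      ∀ y, f y = f 0 := by
    intro f hf hmem y
    exact IsPreconnected.constant_of_mapsTo (isPreconnected_univ) (hT := isDiscrete_iff_discreteTopology.mpr hΛ.1)
      hf.continuousOn (fun z _ => hmem z) (Set.mem_univ y) (Set.mem_univ 0)
  by_cases hne : (((Λ : Set V2)ᶜ) ∩ ((b ⁻¹' (Λ : Set V2))ᶜ)).Nonempty
  · -- translation case: a lands in Λ everywhere
    have hsub : ((Λ : Set V2)ᶜ) ⊆ ((b ⁻¹' (Λ : Set V2))ᶜ) :=
      hconn.subset_left_of_subset_union hB.isOpen_compl hA.isOpen_compl hdisj hcover hne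
    have hsub' : ((Λ : Set V2)ᶜ) ⊆ a ⁻¹' (Λ : Set V2) := fun y hy =>
      (hab y).resolve_right (hsub hy)
    have hAuniv : ∀ y : V2, a y ∈ Λ := by
      intro y
      have : y ∈ closure ((Λ : Set V2)ᶜ) := hdense y
      have : y ∈ closure (a ⁻¹' (Λ : Set V2)) := closure_mono hsub' this
      rwa [hA.closure_eq] at this
    have hl : a 0 ∈ Λ := hAuniv 0
    refine ⟨fun x => (2:ℝ) • (a 0) + x, ⟨a 0, hl, Or.inl rfl⟩, ?_⟩
    funext x
    have key : a (G x) = a 0 := hconst a ha hAuniv (G x)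
    have hFx : F x = H (G x) := by simp [hHdef]
    have : (2⁻¹:ℝ) • (H (G x) - G x) = a 0 := key
    have h2 : H (G x) - G x = (2:ℝ) • (a 0) := by
      have := congrArg (fun v => (2:ℝ) • v) this
      simpa [smul_smul, show (2:ℝ) * 2⁻¹ = 1 by norm_num] using this
    simp only [Function.comp_apply, hFx]
    rw [← h2]
    abel
  · -- reflection case : b lands in Λ everywhere
    have hempty : ((Λ : Set V2)ᶜ) ⊆ b ⁻¹' (Λ : Set V2) := by
      intro y hy
      by_contra hyb
      exact hne ⟨y, hy, hyb⟩
    have hBuniv : ∀ y : V2, b y ∈ Λ := by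
      intro y
      have : y ∈ closure ((Λ : Set V2)ᶜ) := hdense y
      have : y ∈ closure (b ⁻¹' (Λ : Set V2)) := closure_mono hempty this
      rwa [hB.closure_eq] at this
    have hl : b 0 ∈ Λ := hBuniv 0
    refine ⟨fun x => (2:ℝ) • (b 0) - x, ⟨b 0, hl, Or.inr rfl⟩, ?_⟩
    funext x
    have key : b (G x) = b 0 := hconst b hb hBuniv (G x)
    have hFx : F x = H (G x) := by simp [hHdef]
    have : (2⁻¹:ℝ) • (H (G x) + G x) = b 0 := key
    have h2 : H (G x) + G x = (2:ℝ) • (b 0) := by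
      have := congrArg (fun v => (2:ℝ) • v) this
      simpa [smul_smul, show (2:ℝ) * 2⁻¹ = 1 by norm_num] using this
    simp only [Function.comp_apply, hFx]
    rw [← h2]
    abel
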